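/- arXiv:2509.24960 — 2 statements merged into one kernel-verified Lean document; each statement's English description precedes it below -/
import Mathlib

section
/- Let d ≥ 1, r ∈ [1,∞) and ρ0, ρ1 ∈ L^r(ℝ^{2d}, ℝ). Suppose (φ_n) is a sequence of bijections of ℝ^{2d} such that each φ_n and each φ_n^{-1} is measurable and preserves the Lebesgue measure, and suppose ρ0 ∘ φ_n → ρ1 in L^r as n → ∞. Then for all real numbers μ < ν, the Lebesgue measure of {x : μ < ρ1(x) < ν} equals the Lebesgue measure of {x : μ < ρ0(x) < ν}. -/
open MeasureTheory Real

noncomputable section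

/-- The phase space `T*ℝ^d = ℝ^d × ℝ^d` (positions `q` and momenta `p`),
identified with `ℝ^{2d}` with the sup norm and the Lebesgue (symplectic volume) measure. -/
abbrev Phase (d : ℕ) := (Fin d → ℝ) × (Fin d → ℝ)

/-- The Hamiltonian vector field of a function `H : Phase d → ℝ`:
`H⃗(q,p) = (∂_p H(q,p), −∂_q H(q,p))`. -/
def hamVF {d : ℕ} (H : Phase d → ℝ) (x : Phase d) : Phase d :=
  (fun i => fderiv ℝ H x (0, Pi.single i 1),
   fun i => -(fderiv ℝ H x (Pi.single i 1, 0)))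

/-- `φ` is the global flow of the (complete) vector field `X`. -/
def IsFlowOf {d : ℕ} (X : Phase d → Phase d) (φ : ℝ → Phase d → Phase d) : Prop :=
  (∀ x, φ 0 x = x) ∧ ∀ x t, HasDerivAt (fun s => φ s x) (X (φ t x)) t

/-- `Φ` is a smooth diffeomorphism of phase space. -/
def IsDiffeo {d : ℕ} (Φ : Phase d → Phase d) : Prop :=
  ContDiff ℝ (⊤ : ℕ∞) Φ ∧
    ∃ Ψ, ContDiff ℝ (⊤ : ℕ∞) Ψ ∧ Function.LeftInverse Ψ Φ ∧ Function.RightInverse Ψ Φ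

/-- `Φ` is a Hamiltonian diffeomorphism of `T*ℝ^d`: a smooth diffeomorphism which is the
time-1 flow map of a smooth time-dependent Hamiltonian whose non-autonomous Hamiltonian flow
is defined on `[0,1]` from every initial point. -/
def IsHamDiffeo {d : ℕ} (Φ : Phase d → Phase d) : Prop :=
  IsDiffeo Φ ∧
  ∃ (H : ℝ → Phase d → ℝ) (φ : ℝ → Phase d → Phase d),
    ContDiff ℝ (⊤ : ℕ∞) (fun z : ℝ × Phase d => H z.1 z.2) ∧
    (∀ x, φ 0 x = x) ∧
    (∀ x, ∀ t ∈ Set.Icc (0:ℝ) 1,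
      HasDerivWithinAt (fun s => φ s x) (hamVF (H t) (φ t x)) (Set.Icc (0:ℝ) 1) t) ∧
    Φ = φ 1

/-- `Φ` is the flow map from time `0` to time `τ` of the time-dependent Hamiltonian vector
field `H⃗_{u(t)}` for some piecewise constant control `u(·) : [0,τ] → U` (finitely many
pieces): i.e. `Φ` is a finite composition of flows of the autonomous fields `H⃗_{u_i}`
for nonnegative durations summing to `τ`. -/
def Reachable {d : ℕ} {U : Type*} (Ham : U → Phase d → ℝ) (τ : ℝ)
    (Φ : Phase d → Phase d) : Prop :=
  ∃ (n : ℕ) (dur : Fin n → ℝ) (u : Fin n → U) (φ : Fin n → ℝ → Phase d → Phase d),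
    (∀ i, 0 ≤ dur i) ∧ (∑ i, dur i) = τ ∧
    (∀ i, IsFlowOf (hamVF (Ham (u i))) (φ i)) ∧
    Φ = (List.ofFn (fun i => φ i (dur i))).foldl (fun g f => f ∘ g) id

/-- `‖Φ − Ψ‖_{C^ℓ(K)} < ε`: all iterated derivatives of the difference up to order `ℓ`
are smaller than `ε` on `K`. -/
def CloseCl {d : ℕ} (ℓ : ℕ) (K : Set (Phase d)) (ε : ℝ) (Φ Ψ : Phase d → Phase d) : Prop :=
  ∀ j ≤ ℓ, ∀ x ∈ K, ‖iteratedFDeriv ℝ j (fun y => Φ y - Ψ y) x‖ < ε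

/-- `Ψ ∈ R̄_st`: the diffeomorphism `Ψ` is small-time approximately reachable for the
control system with controlled Hamiltonians `Ham u`, `u ∈ U`. -/
def SmallTimeReachable {d : ℕ} {U : Type*} (Ham : U → Phase d → ℝ)
    (Ψ : Phase d → Phase d) : Prop :=
  ∀ ε > 0, ∀ K : Set (Phase d), IsCompact K → ∀ ℓ : ℕ,
    ∃ τ ∈ Set.Icc (0:ℝ) ε, ∃ Φ, Reachable Ham τ Φ ∧ CloseCl ℓ K ε Φ Ψ

/-- A function `f` with complete Hamiltonian vector field is STAR (small-time approximately
reachable) if its flow at every time `s ∈ ℝ` belongs to `R̄_st`. -/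
def IsSTAR {d : ℕ} {U : Type*} (Ham : U → Phase d → ℝ) (f : Phase d → ℝ) : Prop :=
  (∃ φ, IsFlowOf (hamVF f) φ) ∧
  ∀ φ, IsFlowOf (hamVF f) φ → ∀ s : ℝ, SmallTimeReachable Ham (φ s)

/-- The Poisson bracket `{f,g} = Σ_j (∂_{p_j} f ∂_{q_j} g − ∂_{q_j} f ∂_{p_j} g)`. -/
def poissonBracket {d : ℕ} (f g : Phase d → ℝ) : Phase d → ℝ :=
  fun x => ∑ j, (fderiv ℝ f x (0, Pi.single j 1) * fderiv ℝ g x (Pi.single j 1, 0)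
      - fderiv ℝ f x (Pi.single j 1, 0) * fderiv ℝ g x (0, Pi.single j 1))

/-- The mechanical Hamiltonian `H_u(q,p) = |p|²/2 + V_0(q) + Σ_j u_j V_j(q)`. -/
def mechHam {d m : ℕ} (V0 : (Fin d → ℝ) → ℝ) (V : Fin m → (Fin d → ℝ) → ℝ)
    (u : Fin m → ℝ) : Phase d → ℝ :=
  fun x => (∑ i, (x.2 i) ^ 2) / 2 + V0 x.1 + ∑ j, u j * V j x.1

/-- The Euclidean controlled Hamiltonian
`H_u(q,p) = |p|²/2 + V_0(q) + Σ_{j=1}^d u_j q_j + u_{d+1} e^{−|q|²/2}`,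
with control `u ∈ ℝ^d × ℝ ≃ ℝ^{d+1}`. -/
def eucHam {d : ℕ} (V0 : (Fin d → ℝ) → ℝ) (u : (Fin d → ℝ) × ℝ) : Phase d → ℝ :=
  fun x => (∑ i, (x.2 i) ^ 2) / 2 + V0 x.1 + (∑ j, u.1 j * x.1 j)
    + u.2 * Real.exp (-(∑ i, (x.1 i) ^ 2) / 2)

/-- The frequencies `k_1 = e_1, …, k_{d−1} = e_{d−1}, k_d = (1,…,1)`. -/
def kvec (d : ℕ) (j : Fin d) : Fin d → ℝ :=
  if (j : ℕ) < d - 1 then Pi.single j 1 else fun _ => 1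

/-- The torus controlled Hamiltonian (lifted to `ℝ^d × ℝ^d`)
`H_u(q,p) = |p|²/2 + V_0(q) + Σ_{j=1}^d (u_{2j−1} cos(k_j·q) + u_{2j} sin(k_j·q))`,
with control `u ∈ (ℝ²)^d ≃ ℝ^{2d}`. -/
def torusHam {d : ℕ} (V0 : (Fin d → ℝ) → ℝ) (u : Fin d → ℝ × ℝ) : Phase d → ℝ :=
  fun x => (∑ i, (x.2 i) ^ 2) / 2 + V0 x.1 +
    ∑ j, ((u j).1 * Real.cos (∑ i, kvec d j i * x.1 i) +
          (u j).2 * Real.sin (∑ i, kvec d j i * x.1 i))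

/-- The vertical shear `(q,p) ↦ (q, p − ∇f(q))`. -/
def vshear {d : ℕ} (f : (Fin d → ℝ) → ℝ) : Phase d → Phase d :=
  fun x => (x.1, fun i => x.2 i - fderiv ℝ f x.1 (Pi.single i 1))

/-- The horizontal shear `(q,p) ↦ (q + ∇g(p), p)`. -/
def hshear {d : ℕ} (g : (Fin d → ℝ) → ℝ) : Phase d → Phase d :=
  fun x => (fun i => x.1 i + fderiv ℝ g x.2 (Pi.single i 1), x.2)

/-- `M` is a mesh of size `h`: the closed sup-norm cubes `C̄(m_n,h)` cover `ℝ^{2d}` and the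
open cubes `C(m_n,h)` are pairwise disjoint. -/
def IsMesh {d : ℕ} (h : ℝ) (M : ℕ → Phase d) : Prop :=
  (∀ x : Phase d, ∃ n, ‖x - M n‖ ≤ h) ∧
  ∀ n ℓ : ℕ, n ≠ ℓ →
    Disjoint {x : Phase d | ‖x - M n‖ < h} {x : Phase d | ‖x - M ℓ‖ < h}

/-- `F` is a permutation of the mesh `M` of size `h`: a bijection translating every open
cube of the mesh onto another one. -/
def IsMeshPermutation {d : ℕ} (h : ℝ) (M : ℕ → Phase d) (F : Phase d → Phase d) : Prop :=
  Function.Bijective F ∧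
  ∀ n : ℕ, ∃ ℓ : ℕ, ∀ x : Phase d, ‖x - M n‖ < h → F x = x + (M ℓ - M n)

/-- The fundamental domain `Q = [0,2π)^d × ℝ^d` of `T*𝕋^d` in `ℝ^d × ℝ^d`. -/
def torusBlock (d : ℕ) : Set (Phase d) :=
  {x : Phase d | ∀ i, 0 ≤ x.1 i ∧ x.1 i < 2 * Real.pi}

/-- A torus density of class `L^r`: a measurable function on `ℝ^d × ℝ^d`, `2π`-periodic in
each position variable, with finite `L^r` norm on the fundamental domain `Q`. -/
def IsTorusDensity {d : ℕ} (p : ENNReal) (ρ : Phase d → ℝ) : Prop :=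
  Measurable ρ ∧
  (∀ (q : Fin d → ℝ) (pp : Fin d → ℝ) (k : Fin d → ℤ),
    ρ (fun i => q i + 2 * Real.pi * (k i), pp) = ρ (q, pp)) ∧
  eLpNorm ρ p (volume.restrict (torusBlock d)) < ⊤

end
/-- **Inclusion `closure(O(ρ0)) ⊆ L(ρ0)`.**
If `ρ0 ∘ φ_n → ρ1` in `L^r` for a sequence of measure-preserving bijections `φ_n` of
`ℝ^{2d}` (with measure-preserving measurable inverses), then all strict level sets
`{μ < ρ1 < ν}` of `ρ1` have the same Lebesgue measure as those of `ρ0`. -/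
theorem level_sets_of_Lr_limit_of_measurePreserving
    (d : ℕ) (hd : 1 ≤ d) (r : ℝ) (hr : 1 ≤ r) (ρ0 ρ1 : Phase d → ℝ)
    (hρ0 : MemLp ρ0 (ENNReal.ofReal r) volume)
    (hρ1 : MemLp ρ1 (ENNReal.ofReal r) volume)
    (φ : ℕ → Phase d → Phase d)
    (hbij : ∀ n, Function.Bijective (φ n))
    (hmp : ∀ n, MeasurePreserving (φ n) volume volume)
    (hmpinv : ∀ n, MeasurePreserving (Function.invFun (φ n)) volume volume)
    (hconv : Filter.Tendsto
      (fun n => eLpNorm (fun x => ρ0 (φ n x) - ρ1 x) (ENNReal.ofReal r) volume)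
      Filter.atTop (nhds 0)) :
    ∀ μ ν : ℝ, μ < ν →
      volume {x : Phase d | μ < ρ1 x ∧ ρ1 x < ν}
        = volume {x : Phase d | μ < ρ0 x ∧ ρ0 x < ν} := by
  intro μ ν hμν
  have hp0 : (ENNReal.ofReal r) ≠ 0 := by
    simp [ENNReal.ofReal_eq_zero]; linarith
  have hpt : (ENNReal.ofReal r) ≠ ⊤ := ENNReal.ofReal_ne_top
  have hfn : ∀ n, AEStronglyMeasurable (fun x => ρ0 (φ n x)) volume := fun n =>
    hρ0.aestronglyMeasurable.comp_measurePreserving (hmp n)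
  have htim : TendstoInMeasure volume (fun n x => ρ0 (φ n x)) Filter.atTop ρ1 := by
    exact tendstoInMeasure_of_tendsto_eLpNorm hp0 hfn hρ1.aestronglyMeasurable hconv
  -- generic inclusion
  have chain : ∀ (F G : Phase d → ℝ) (δ : ℝ), 0 < δ →
      {x : Phase d | μ + δ ≤ F x ∧ F x ≤ ν - δ} ⊆
        {x : Phase d | μ < G x ∧ G x < ν} ∪ {x : Phase d | δ ≤ |F x - G x|} := by
    intro F G δ hδ x hx
    by_cases h : δ ≤ |F x - G x|
    · exact Or.inr h
    · left
      push_neg at h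
      obtain ⟨h1, h2⟩ := abs_lt.mp h
      exact ⟨by linarith [hx.1], by linarith [hx.2]⟩
  -- write open level set as increasing union of closed shrunken level sets
  have hunion : ∀ ρ : Phase d → ℝ,
      volume {x : Phase d | μ < ρ x ∧ ρ x < ν}
        = ⨆ k : ℕ, volume {x : Phase d | μ + 1/(k+1) ≤ ρ x ∧ ρ x ≤ ν - 1/(k+1)} := by
    intro ρ
    have hmono : Monotone (fun k : ℕ =>
        {x : Phase d | μ + 1/(k+1) ≤ ρ x ∧ ρ x ≤ ν - 1/(k+1)}) := by
      intro k l hkl x hx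
      have h1 : (1:ℝ)/(l+1) ≤ 1/(k+1) := by
        apply one_div_le_one_div_of_le (by positivity)
        exact_mod_cast Nat.succ_le_succ hkl
      exact ⟨by linarith [hx.1], by linarith [hx.2]⟩
    rw [← hmono.directed_le.measure_iUnion]
    congr 1
    ext x
    constructor
    · rintro ⟨h1, h2⟩
      obtain ⟨k, hk⟩ := exists_nat_one_div_lt (lt_min (sub_pos.mpr h1) (sub_pos.mpr h2))
      exact Set.mem_iUnion.mpr ⟨k, le_of_lt (by
          have := lt_min_iff.mp hk
          linarith [this.1]),
        le_of_lt (by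
          have := lt_min_iff.mp hk
          linarith [this.2])⟩
    · intro hx
      obtain ⟨k, h1, h2⟩ := Set.mem_iUnion.mp hx
      have hk : (0:ℝ) < 1/(k+1) := by positivity
      exact ⟨by linarith, by linarith⟩
  -- constant measures by measure preservation
  have hpre : ∀ (s : Set ℝ), MeasurableSet s → ∀ n,
      volume {x : Phase d | ρ0 (φ n x) ∈ s} = volume {x : Phase d | ρ0 x ∈ s} := by
    intro s hs n
    have : NullMeasurableSet {x : Phase d | ρ0 x ∈ s} volume :=
      hρ0.aestronglyMeasurable.aemeasurable.nullMeasurable hs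
    exact (hmp n).measure_preimage this
  -- main one-sided estimate
  have key : ∀ k : ℕ,
      volume {x : Phase d | μ + 1/(k+1) ≤ ρ1 x ∧ ρ1 x ≤ ν - 1/(k+1)}
        ≤ volume {x : Phase d | μ < ρ0 x ∧ ρ0 x < ν} := by
    intro k
    set δ : ℝ := 1/(k+1) with hδdef
    have hδ : 0 < δ := by positivity
    have hE := htim (ENNReal.ofReal δ) (ENNReal.ofReal_pos.mpr hδ)
    simp only [edist_dist, ENNReal.ofReal_le_ofReal_iff dist_nonneg] at hE
    refine ge_of_tendsto' ((hE.const_add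
      (volume {x : Phase d | μ < ρ0 x ∧ ρ0 x < ν})).mono_right
      (by rw [add_zero])) (fun n => ?_)
    calc volume {x : Phase d | μ + δ ≤ ρ1 x ∧ ρ1 x ≤ ν - δ}
        ≤ volume ({x : Phase d | μ < ρ0 (φ n x) ∧ ρ0 (φ n x) < ν}
            ∪ {x : Phase d | δ ≤ |ρ1 x - ρ0 (φ n x)|}) :=
          measure_mono (chain ρ1 (fun x => ρ0 (φ n x)) δ hδ)
      _ ≤ volume {x : Phase d | μ < ρ0 (φ n x) ∧ ρ0 (φ n x) < ν}
            + volume {x : Phase d | δ ≤ |ρ1 x - ρ0 (φ n x)|} := measure_union_le _ _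
      _ = volume {x : Phase d | μ < ρ0 x ∧ ρ0 x < ν}
            + volume {x : Phase d | δ ≤ dist (ρ0 (φ n x)) (ρ1 x)} := by
          have h1 := hpre (Set.Ioo μ ν) measurableSet_Ioo n
          simp only [Set.mem_Ioo] at h1
          rw [h1]
          congr 2; ext x; simp [Real.dist_eq, abs_sub_comm]
  have key2 : ∀ k : ℕ,
      volume {x : Phase d | μ + 1/(k+1) ≤ ρ0 x ∧ ρ0 x ≤ ν - 1/(k+1)}
        ≤ volume {x : Phase d | μ < ρ1 x ∧ ρ1 x < ν} := by
    intro k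
    set δ : ℝ := 1/(k+1) with hδdef
    have hδ : 0 < δ := by positivity
    have hE := htim (ENNReal.ofReal δ) (ENNReal.ofReal_pos.mpr hδ)
    simp only [edist_dist, ENNReal.ofReal_le_ofReal_iff dist_nonneg] at hE
    refine ge_of_tendsto' ((hE.const_add
      (volume {x : Phase d | μ < ρ1 x ∧ ρ1 x < ν})).mono_right
      (by rw [add_zero])) (fun n => ?_)
    calc volume {x : Phase d | μ + δ ≤ ρ0 x ∧ ρ0 x ≤ ν - δ}
        = volume {x : Phase d | μ + δ ≤ ρ0 (φ n x) ∧ ρ0 (φ n x) ≤ ν - δ} := by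
          exact (hpre (Set.Icc (μ + δ) (ν - δ)) measurableSet_Icc n).symm
      _ ≤ volume ({x : Phase d | μ < ρ1 x ∧ ρ1 x < ν}
            ∪ {x : Phase d | δ ≤ |ρ0 (φ n x) - ρ1 x|}) :=
          measure_mono (chain (fun x => ρ0 (φ n x)) ρ1 δ hδ)
      _ ≤ volume {x : Phase d | μ < ρ1 x ∧ ρ1 x < ν}
            + volume {x : Phase d | δ ≤ |ρ0 (φ n x) - ρ1 x|} := measure_union_le _ _
      _ = volume {x : Phase d | μ < ρ1 x ∧ ρ1 x < ν}
            + volume {x : Phase d | δ ≤ dist (ρ0 (φ n x)) (ρ1 x)} := by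
          simp only [Real.dist_eq]
  apply le_antisymm
  · rw [hunion ρ1]; exact iSup_le key
  · rw [hunion ρ0]; exact iSup_le key2
end

section
/- Consider the control system on T*ℝ^d = ℝ^d × ℝ^d with Hamiltonians H_u(q,p) = |p|²/2 + u|q|²/2, scalar control u ∈ ℝ. Then the function |p|² is STAR: for every s ∈ ℝ (including s < 0) the map (q,p) ↦ (q + 2sp, p), which is the time-s flow of the Hamiltonian vector field of |p|², is small-time approximately reachable. -/
open MeasureTheory Real

noncomputable section AuxSTAR
open Real

variable {d : ℕ}

/-! ### Derivative of the quadratic Hamiltonians -/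

noncomputable def L2aux (x : Phase d) : Phase d →L[ℝ] ℝ :=
  ∑ i, (2 * x.2 i) • ((ContinuousLinearMap.proj i).comp
    (ContinuousLinearMap.snd ℝ (Fin d → ℝ) (Fin d → ℝ)))

noncomputable def L1aux (x : Phase d) : Phase d →L[ℝ] ℝ :=
  ∑ i, (2 * x.1 i) • ((ContinuousLinearMap.proj i).comp
    (ContinuousLinearMap.fst ℝ (Fin d → ℝ) (Fin d → ℝ)))

lemma hasFDerivAt_sumsq_snd (x : Phase d) :
    HasFDerivAt (fun y : Phase d => ∑ i, (y.2 i)^2) (L2aux x) x := by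
  apply HasFDerivAt.fun_sum
  intro i _
  have h := (hasDerivAt_pow 2 (x.2 i)).comp_hasFDerivAt x
    (((ContinuousLinearMap.proj i).comp
      (ContinuousLinearMap.snd ℝ (Fin d → ℝ) (Fin d → ℝ))).hasFDerivAt)
  simpa [Function.comp_def] using h

lemma hasFDerivAt_sumsq_fst (x : Phase d) :
    HasFDerivAt (fun y : Phase d => ∑ i, (y.1 i)^2) (L1aux x) x := by
  apply HasFDerivAt.fun_sum
  intro i _
  have h := (hasDerivAt_pow 2 (x.1 i)).comp_hasFDerivAt x
    (((ContinuousLinearMap.proj i).comp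
      (ContinuousLinearMap.fst ℝ (Fin d → ℝ) (Fin d → ℝ))).hasFDerivAt)
  simpa [Function.comp_def] using h

lemma L2aux_apply (x v : Phase d) : L2aux x v = ∑ i, 2 * x.2 i * v.2 i := by
  simp [L2aux]

lemma L1aux_apply (x v : Phase d) : L1aux x v = ∑ i, 2 * x.1 i * v.1 i := by
  simp [L1aux]

lemma ham_hasFDerivAt (u : ℝ) (x : Phase d) :
    HasFDerivAt (fun x : Phase d => (∑ i, (x.2 i) ^ 2) / 2 + u * ((∑ i, (x.1 i) ^ 2) / 2))
      ((2⁻¹ : ℝ) • L2aux x + (u/2) • L1aux x) x := by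
  have h : (fun x : Phase d => (∑ i, (x.2 i) ^ 2) / 2 + u * ((∑ i, (x.1 i) ^ 2) / 2))
      = fun y : Phase d => 2⁻¹ * (∑ i, (y.2 i)^2) + (u/2) * (∑ i, (y.1 i)^2) := by
    funext y; ring
  rw [h]
  exact ((hasFDerivAt_sumsq_snd x).const_mul 2⁻¹).add ((hasFDerivAt_sumsq_fst x).const_mul (u/2))

lemma hamVF_ham (u : ℝ) (x : Phase d) :
    hamVF (fun x : Phase d => (∑ i, (x.2 i) ^ 2) / 2 + u * ((∑ i, (x.1 i) ^ 2) / 2)) x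
      = (x.2, fun i => -(u * x.1 i)) := by
  have h := (ham_hasFDerivAt u x).fderiv
  unfold hamVF
  rw [h]
  refine Prod.ext ?_ ?_
  · funext i
    simp [L2aux_apply, L1aux_apply, mul_comm]
    rw [Finset.sum_eq_single i] <;> simp +contextual [Pi.single_apply]
  · funext i
    simp [L2aux_apply, L1aux_apply]
    rw [Finset.sum_eq_single i] <;> simp +contextual [Pi.single_apply]
    ring

/-! ### Componentwise linear maps and explicit flows -/

noncomputable def QHam (d : ℕ) : ℝ → Phase d → ℝ :=
  fun u x => (∑ i, (x.2 i) ^ 2) / 2 + u * ((∑ i, (x.1 i) ^ 2) / 2)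

def lin {d : ℕ} (a b c e : ℝ) : Phase d → Phase d :=
  fun x => (fun i => a * x.1 i + b * x.2 i, fun i => c * x.1 i + e * x.2 i)

lemma lin_comp (a b c e a' b' c' e' : ℝ) :
    (lin (d := d) a b c e) ∘ (lin a' b' c' e')
      = lin (a*a'+b*c') (a*b'+b*e') (c*a'+e*c') (c*b'+e*e') := by
  funext x
  refine Prod.ext ?_ ?_ <;> funext i <;> simp [lin, Function.comp] <;> ring

lemma lin_congr {a b c e a' b' c' e' : ℝ} (h1 : a = a') (h2 : b = b')
    (h3 : c = c') (h4 : e = e') : lin (d := d) a b c e = lin a' b' c' e' := by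
  rw [h1, h2, h3, h4]

lemma lin_id : lin (d := d) 1 0 0 1 = id := by
  funext x; refine Prod.ext ?_ ?_ <;> funext i <;> simp [lin]

lemma isFlowOf_shear :
    IsFlowOf (d := d) (hamVF (QHam d 0)) (fun t => lin 1 t 0 1) := by
  have hQ : QHam d 0 = (fun x : Phase d => (∑ i, (x.2 i) ^ 2) / 2
      + (0:ℝ) * ((∑ i, (x.1 i) ^ 2) / 2)) := rfl
  rw [hQ]
  constructor
  · intro x; refine Prod.ext ?_ ?_ <;> funext i <;> simp [lin]
  · intro x t
    rw [hamVF_ham]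
    apply HasDerivAt.prodMk
    · rw [hasDerivAt_pi]
      intro i
      simpa [lin, mul_comm] using ((hasDerivAt_id t).const_mul (x.2 i)).const_add (1 * x.1 i)
    · rw [hasDerivAt_pi]
      intro i
      simpa [lin] using (hasDerivAt_const t (0 * x.1 i + 1 * x.2 i))

lemma isFlowOf_rot (ω : ℝ) (hω : ω ≠ 0) :
    IsFlowOf (d := d) (hamVF (QHam d (ω^2)))
      (fun t => lin (cos (ω*t)) (sin (ω*t)/ω) (-(ω * sin (ω*t))) (cos (ω*t))) := by
  have hQ : QHam d (ω^2) = (fun x : Phase d => (∑ i, (x.2 i) ^ 2) / 2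
      + (ω^2) * ((∑ i, (x.1 i) ^ 2) / 2)) := rfl
  rw [hQ]
  constructor
  · intro x; refine Prod.ext ?_ ?_ <;> funext i <;> simp [lin]
  · intro x t
    rw [hamVF_ham]
    have hc : HasDerivAt (fun s => cos (ω*s)) (-(ω * sin (ω*t))) t := by
      simpa [mul_comm, Function.comp_def] using (Real.hasDerivAt_cos (ω*t)).comp t ((hasDerivAt_id t).const_mul ω)
    have hs : HasDerivAt (fun s => sin (ω*s)) (ω * cos (ω*t)) t := by
      simpa [mul_comm, Function.comp_def] using (Real.hasDerivAt_sin (ω*t)).comp t ((hasDerivAt_id t).const_mul ω)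
    apply HasDerivAt.prodMk
    · rw [hasDerivAt_pi]
      intro i
      have h1 : HasDerivAt (fun s => cos (ω*s) * x.1 i + sin (ω*s)/ω * x.2 i)
          ((-(ω * sin (ω*t))) * x.1 i + (ω * cos (ω*t))/ω * x.2 i) t :=
        (hc.mul_const _).add ((hs.div_const ω).mul_const _)
      refine h1.congr_deriv ?_
      simp [lin]
      try field_simp
      try ring
      simp
    · rw [hasDerivAt_pi]
      intro i
      have h1 : HasDerivAt (fun s => -(ω * sin (ω*s)) * x.1 i + cos (ω*s) * x.2 i)
          ((-(ω * (ω * cos (ω*t)))) * x.1 i + (-(ω * sin (ω*t))) * x.2 i) t := by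
        exact (((hs.const_mul ω).neg).mul_const _).add (hc.mul_const _)
      refine h1.congr_deriv ?_
      simp only [lin]
      try field_simp
      try ring

/-! ### Concatenation of reachable flows -/

lemma foldl_comp_eq {α : Type*} (L : List ((α → α))) (g : α → α) :
    L.foldl (fun g f => f ∘ g) g = (L.foldl (fun g f => f ∘ g) id) ∘ g := by
  induction L generalizing g with
  | nil => simp
  | cons f0 L ih =>
    simp only [List.foldl_cons]
    rw [ih (f0 ∘ g), ih (f0 ∘ id)]
    rfl

lemma reachable_id {U : Type*} {Ham : U → Phase d → ℝ} :
    Reachable Ham 0 (id : Phase d → Phase d) :=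
  ⟨0, ![], ![], ![], by simp, by simp, by simp, by simp⟩

lemma reachable_single {U : Type*} {Ham : U → Phase d → ℝ} {t : ℝ} (ht : 0 ≤ t) {u : U}
    {φ : ℝ → Phase d → Phase d}
    (hφ : IsFlowOf (hamVF (Ham u)) φ) : Reachable Ham t (φ t) := by
  refine ⟨1, fun _ => t, fun _ => u, fun _ => φ, fun _ => ht, by simp, fun _ => hφ, ?_⟩
  simp [List.ofFn]
  rfl

lemma reachable_comp {U : Type*} {Ham : U → Phase d → ℝ} {τ1 τ2 : ℝ}
    {Φ1 Φ2 : Phase d → Phase d}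
    (h1 : Reachable Ham τ1 Φ1) (h2 : Reachable Ham τ2 Φ2) :
    Reachable Ham (τ1 + τ2) (Φ2 ∘ Φ1) := by
  obtain ⟨n1, dur1, u1, φ1, hd1, hs1, hf1, he1⟩ := h1
  obtain ⟨n2, dur2, u2, φ2, hd2, hs2, hf2, he2⟩ := h2
  refine ⟨n1 + n2, Fin.append dur1 dur2, Fin.append u1 u2, Fin.append φ1 φ2, ?_, ?_, ?_, ?_⟩
  · intro i
    refine Fin.addCases (fun j => ?_) (fun j => ?_) i
    · rw [Fin.append_left]; exact hd1 _
    · rw [Fin.append_right]; exact hd2 _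
  · rw [Fin.sum_univ_add]
    simp only [Fin.append_left, Fin.append_right, hs1, hs2]
  · intro i
    refine Fin.addCases (fun j => ?_) (fun j => ?_) i
    · simp only [Fin.append_left]; exact hf1 _
    · simp only [Fin.append_right]; exact hf2 _
  · have : (List.ofFn fun i => Fin.append φ1 φ2 i (Fin.append dur1 dur2 i))
        = (List.ofFn fun i => φ1 i (dur1 i)) ++ (List.ofFn fun i => φ2 i (dur2 i)) := by
      rw [List.ofFn_add]
      congr 1 <;> exact congrArg _ (funext fun j => by simp [Fin.append_left, Fin.append_right])
    rw [this, List.foldl_append, foldl_comp_eq, ← he1, ← he2]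

/-! ### Small-time reachable building blocks -/

def SmallReach {d : ℕ} (Φ : Phase d → Phase d) : Prop :=
  ∀ δ > (0:ℝ), ∃ τ ∈ Set.Icc (0:ℝ) δ, Reachable (QHam d) τ Φ

lemma smallReach_comp {Φ1 Φ2 : Phase d → Phase d} (h1 : SmallReach Φ1)
    (h2 : SmallReach Φ2) : SmallReach (Φ2 ∘ Φ1) := by
  intro δ hδ
  obtain ⟨τ1, ⟨h10, h1δ⟩, hr1⟩ := h1 (δ/2) (by linarith)
  obtain ⟨τ2, ⟨h20, h2δ⟩, hr2⟩ := h2 (δ/2) (by linarith)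
  exact ⟨τ1 + τ2, ⟨by linarith, by linarith⟩, reachable_comp hr1 hr2⟩

lemma exists_freq (C δ : ℝ) (hδ : 0 < δ) : ∃ ω : ℝ, 1 ≤ ω ∧ C/ω ≤ δ := by
  refine ⟨max 1 (C/δ), le_max_left _ _, ?_⟩
  have hω : (0:ℝ) < max 1 (C/δ) := lt_of_lt_of_le one_pos (le_max_left _ _)
  rw [div_le_iff₀ hω]
  calc C = (C/δ) * δ := by field_simp
    _ ≤ max 1 (C/δ) * δ := by nlinarith [le_max_right 1 (C/δ)]
    _ = δ * max 1 (C/δ) := by ring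

lemma reach_rot_angle {ω : ℝ} (hω : 0 < ω) {θ : ℝ} (hθ : 0 ≤ θ) :
    Reachable (QHam d) (θ/ω)
      (lin (cos θ) (sin θ/ω) (-(ω * sin θ)) (cos θ)) := by
  have h := reachable_single (d := d) (t := θ/ω) (by positivity) (isFlowOf_rot ω hω.ne')
  have : ω * (θ/ω) = θ := by field_simp
  rwa [this] at h

lemma smallReach_diag {μ : ℝ} (hμ : 0 < μ) : SmallReach (lin (d := d) μ 0 0 (1/μ)) := by
  intro δ hδ
  obtain ⟨hω2a, hω2b⟩ := (exists_freq ((π + π/2)/μ + π/2) δ hδ).choose_spec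
  set ω2 := (exists_freq ((π + π/2)/μ + π/2) δ hδ).choose with hω2def
  have hω2 : 0 < ω2 := lt_of_lt_of_le one_pos hω2a
  set ω1 := μ * ω2 with hω1def
  have hω1 : 0 < ω1 := by positivity
  have hpi : (0:ℝ) < π := pi_pos
  have r1 := reach_rot_angle (d := d) hω1 (θ := π + π/2) (by linarith)
  have r2 := reach_rot_angle (d := d) hω2 (θ := π/2) (by linarith)
  have hcomp := reachable_comp r1 r2
  have hmat : (lin (cos (π/2)) (sin (π/2)/ω2) (-(ω2 * sin (π/2))) (cos (π/2))) ∘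
      (lin (d := d) (cos (π + π/2)) (sin (π + π/2)/ω1) (-(ω1 * sin (π + π/2))) (cos (π + π/2)))
      = lin μ 0 0 (1/μ) := by
    rw [lin_comp]
    simp [Real.sin_pi_div_two, Real.cos_pi_div_two, Real.sin_add, Real.cos_add]
    rw [hω1def]
    apply lin_congr <;> field_simp <;> ring
  rw [hmat] at hcomp
  refine ⟨(π + π/2)/ω1 + (π/2)/ω2, ⟨by positivity, ?_⟩, hcomp⟩
  have : (π + π/2)/ω1 + (π/2)/ω2 = ((π + π/2)/μ + π/2)/ω2 := by
    field_simp
    ring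
  rw [this]
  exact hω2b

lemma smallReach_negI : SmallReach (lin (d := d) (-1) 0 0 (-1)) := by
  intro δ hδ
  obtain ⟨hωa, hωb⟩ := (exists_freq π δ hδ).choose_spec
  set ω := (exists_freq π δ hδ).choose
  have hω : 0 < ω := lt_of_lt_of_le one_pos hωa
  have hpi : (0:ℝ) < π := pi_pos
  have r := reach_rot_angle (d := d) hω (θ := π) (by linarith)
  have hmat : (lin (d := d) (cos π) (sin π/ω) (-(ω * sin π)) (cos π)) = lin (-1) 0 0 (-1) := by
    apply lin_congr <;> simp
  rw [hmat] at r
  exact ⟨π/ω, ⟨by positivity, hωb⟩, r⟩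

lemma smallReach_lower {c : ℝ} (hc : c ≤ 0) : SmallReach (lin (d := d) 1 0 c 1) := by
  intro δ hδ
  obtain ⟨hωa, hωb⟩ := (exists_freq (2*π + (-c)) δ hδ).choose_spec
  set ω := (exists_freq (2*π + (-c)) δ hδ).choose
  have hω : 0 < ω := lt_of_lt_of_le one_pos hωa
  have hpi : (0:ℝ) < π := pi_pos
  set t := (-c)/ω^2 with ht
  have hc' : 0 ≤ -c := by linarith
  have ht0 : 0 ≤ t := by positivity
  have r1 := reach_rot_angle (d := d) hω (θ := π + π/2) (by linarith)
  have r2 := reachable_single (d := d) ht0 isFlowOf_shear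
  have r3 := reach_rot_angle (d := d) hω (θ := π/2) (by linarith)
  have hcomp := reachable_comp (reachable_comp r1 r2) r3
  have hmat : (lin (d := d) (cos (π/2)) (sin (π/2)/ω) (-(ω * sin (π/2))) (cos (π/2))) ∘
      ((lin 1 t 0 1) ∘
        (lin (cos (π + π/2)) (sin (π + π/2)/ω) (-(ω * sin (π + π/2))) (cos (π + π/2))))
      = lin 1 0 c 1 := by
    rw [lin_comp, lin_comp]
    refine lin_congr ?_ ?_ ?_ ?_ <;>
      (simp only [ht]; simp [Real.sin_add, Real.cos_add]; try field_simp; try ring)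
  rw [hmat] at hcomp
  refine ⟨(π + π/2)/ω + t + (π/2)/ω, ⟨by positivity, ?_⟩, hcomp⟩
  have h2 : (-c)/ω^2 ≤ (-c)/ω := by
    gcongr <;> nlinarith
  have h1 : (π + π/2)/ω + t + (π/2)/ω = 2*π/ω + (-c)/ω^2 := by rw [ht]; ring
  rw [h1]
  calc 2*π/ω + (-c)/ω^2 ≤ 2*π/ω + (-c)/ω := by linarith
    _ = (2*π + -c)/ω := by ring
    _ ≤ δ := hωb

lemma smallReach_posshear {b : ℝ} (hb : 0 ≤ b) : SmallReach (lin (d := d) 1 b 0 1) := by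
  rcases eq_or_lt_of_le hb with he | hb0
  · intro δ hδ
    refine ⟨0, ⟨le_refl _, le_of_lt hδ⟩, ?_⟩
    have : lin (d := d) 1 b 0 1 = id := by rw [← he]; exact lin_id
    rw [this]; exact reachable_id
  · intro δ hδ
    set t := min (δ/3) b with htdef
    have ht0 : 0 < t := lt_min (by linarith) hb0
    set μ := Real.sqrt (b/t) with hμdef
    have hbt : 0 < b/t := by positivity
    have hμ : 0 < μ := Real.sqrt_pos.mpr hbt
    have hμ2 : μ^2 = b/t := Real.sq_sqrt hbt.le
    obtain ⟨τ1, ⟨h10, h1δ⟩, hr1⟩ :=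
      smallReach_diag (d := d) (by positivity : (0:ℝ) < 1/μ) (δ/3) (by linarith)
    obtain ⟨τ3, ⟨h30, h3δ⟩, hr3⟩ := smallReach_diag (d := d) hμ (δ/3) (by linarith)
    have r2 := reachable_single (d := d) ht0.le isFlowOf_shear
    have hcomp := reachable_comp (reachable_comp hr1 r2) hr3
    have hmat : (lin (d := d) μ 0 0 (1/μ)) ∘ ((lin 1 t 0 1) ∘ (lin (1/μ) 0 0 (1/(1/μ))))
        = lin 1 b 0 1 := by
      rw [lin_comp, lin_comp]
      apply lin_congr <;> field_simp
      · ring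
      · calc μ * (0 + μ * t) + 0 * (0 ^ 2 + μ) = μ^2 * t := by ring
          _ = b := by rw [hμ2]; field_simp
      · ring
      · ring
    rw [hmat] at hcomp
    exact ⟨τ1 + t + τ3, ⟨by positivity, by
      have : t ≤ δ/3 := min_le_left _ _
      linarith⟩, hcomp⟩

lemma smallReach_shear (b : ℝ) : SmallReach (lin (d := d) 1 b 0 1) := by
  rcases le_or_gt 0 b with hb | hb
  · exact smallReach_posshear hb
  · have ha : 0 < -b := by linarith
    set c := -2/(-b) with hcdef
    have hc : c ≤ 0 := by
      rw [hcdef]; apply div_nonpos_of_nonpos_of_nonneg <;> linarith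
    have h1 := smallReach_lower (d := d) hc
    have h2 := smallReach_posshear (d := d) ha.le
    have h4 := smallReach_negI (d := d)
    have hbne : b ≠ 0 := hb.ne
    have hcomp := smallReach_comp (smallReach_comp (smallReach_comp h1 h2) h1) h4
    have hmat : (lin (d := d) (-1) 0 0 (-1)) ∘
        ((lin 1 0 c 1) ∘ ((lin 1 (-b) 0 1) ∘ (lin 1 0 c 1)))
        = lin 1 b 0 1 := by
      rw [lin_comp, lin_comp, lin_comp]
      refine lin_congr ?_ ?_ ?_ ?_ <;>
        (rw [hcdef]; field_simp; try ring)
    rw [hmat] at hcomp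
    exact hcomp

/-! ### The kinetic energy flow and its uniqueness -/

lemma hamVF_kin (x : Phase d) :
    hamVF (fun x : Phase d => ∑ i, (x.2 i)^2) x = (fun i => 2 * x.2 i, fun _ => 0) := by
  have h := (hasFDerivAt_sumsq_snd x).fderiv
  unfold hamVF
  rw [h]
  refine Prod.ext ?_ ?_ <;> funext i <;> simp [L2aux_apply]
  · rw [Finset.sum_eq_single i] <;> simp +contextual [Pi.single_apply]

def kinFlow (d : ℕ) : ℝ → Phase d → Phase d :=
  fun s x => (fun i => x.1 i + 2*s*x.2 i, x.2)

lemma isFlowOf_kin : IsFlowOf (d := d) (hamVF (fun x : Phase d => ∑ i, (x.2 i)^2))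
    (kinFlow d) := by
  constructor
  · intro x; refine Prod.ext ?_ ?_ <;> funext i <;> simp [kinFlow]
  · intro x t
    rw [hamVF_kin]
    apply HasDerivAt.prodMk
    · rw [hasDerivAt_pi]
      intro i
      simpa [kinFlow] using
        ((((hasDerivAt_id t).const_mul 2).mul_const (x.2 i)).const_add (x.1 i))
    · rw [hasDerivAt_pi]
      intro i
      exact hasDerivAt_const t _

lemma kin_flow_unique (φ : ℝ → Phase d → Phase d)
    (hφ : IsFlowOf (hamVF (fun x : Phase d => ∑ i, (x.2 i)^2)) φ) (s : ℝ) (x : Phase d) :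
    φ s x = kinFlow d s x := by
  obtain ⟨h0, hd⟩ := hφ
  have hp : ∀ i : Fin d, ∀ t : ℝ, (φ t x).2 i = x.2 i := by
    intro i t
    set L : Phase d →L[ℝ] ℝ := (ContinuousLinearMap.proj i).comp
      (ContinuousLinearMap.snd ℝ (Fin d → ℝ) (Fin d → ℝ)) with hL
    have hder : ∀ r : ℝ, HasDerivAt (fun t => (φ t x).2 i) 0 r := by
      intro r
      have := (L.hasFDerivAt).comp_hasDerivAt r (hd x r)
      rw [hamVF_kin] at this
      simpa [hL, Function.comp_def] using this
    have hc := is_const_of_deriv_eq_zero (fun r => (hder r).differentiableAt)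
      (fun r => (hder r).deriv) t 0
    rw [hc, h0]
  have hq : ∀ i : Fin d, (φ s x).1 i = x.1 i + 2*s*x.2 i := by
    intro i
    set L : Phase d →L[ℝ] ℝ := (ContinuousLinearMap.proj i).comp
      (ContinuousLinearMap.fst ℝ (Fin d → ℝ) (Fin d → ℝ)) with hL
    have hder : ∀ r : ℝ, HasDerivAt (fun t => (φ t x).1 i - 2*t*x.2 i) 0 r := by
      intro r
      have h1 := (L.hasFDerivAt).comp_hasDerivAt r (hd x r)
      rw [hamVF_kin] at h1
      have h1' : HasDerivAt (fun t => (φ t x).1 i) (2 * (φ r x).2 i) r := by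
        simpa [hL, Function.comp_def] using h1
      have h2 : HasDerivAt (fun t : ℝ => 2*t*x.2 i) (2 * x.2 i) r := by
        simpa using ((hasDerivAt_id r).const_mul 2).mul_const (x.2 i)
      have := h1'.sub h2
      rw [hp i r] at this
      simpa [Pi.sub_def] using this
    have hc := is_const_of_deriv_eq_zero (fun r => (hder r).differentiableAt)
      (fun r => (hder r).deriv) s 0
    simp only [h0] at hc
    have : (φ s x).1 i - 2*s*x.2 i = x.1 i := by simpa using hc
    linarith
  refine Prod.ext ?_ ?_
  · funext i; exact hq i
  · funext i; exact hp i s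

lemma key {d : ℕ} (s : ℝ) : SmallTimeReachable (QHam d)
    (fun x : Phase d => (fun i => x.1 i + 2*s*x.2 i, x.2)) := by
  intro ε hε K _ ℓ
  obtain ⟨τ, hτ, hr⟩ := smallReach_shear (d := d) (2*s) ε hε
  refine ⟨τ, hτ, lin 1 (2*s) 0 1, hr, ?_⟩
  intro j _ x _
  have hzero : (fun y : Phase d => lin 1 (2*s) 0 1 y
      - (fun i => y.1 i + 2*s*y.2 i, y.2)) = fun _ => (0 : Phase d) := by
    funext y
    refine Prod.ext ?_ ?_ <;> funext i <;> simp [lin] <;> ring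
  rw [hzero, iteratedFDeriv_zero_fun]
  simpa using hε

end AuxSTAR


/-- **Proposition (the kinetic energy `|p|²` is STAR for the harmonic oscillator system).**
For the control system on `T*ℝ^d` with Hamiltonians `H_u(q,p) = |p|²/2 + u|q|²/2`,
`u ∈ ℝ`, the function `|p|²` is STAR: for every `s ∈ ℝ` (including `s < 0`) the map
`(q,p) ↦ (q + 2sp, p)`, the time-`s` flow of the Hamiltonian vector field of `|p|²`,
is small-time approximately reachable. -/
theorem kinetic_energy_star_quadratic
    (d : ℕ) :
    IsSTAR (fun (u : ℝ) (x : Phase d) =>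
        (∑ i, (x.2 i) ^ 2) / 2 + u * ((∑ i, (x.1 i) ^ 2) / 2))
      (fun x : Phase d => ∑ i, (x.2 i) ^ 2) ∧
    ∀ s : ℝ, SmallTimeReachable
      (fun (u : ℝ) (x : Phase d) =>
        (∑ i, (x.2 i) ^ 2) / 2 + u * ((∑ i, (x.1 i) ^ 2) / 2))
      (fun x : Phase d => (fun i => x.1 i + 2 * s * x.2 i, x.2)) := by
  constructor
  · refine ⟨⟨kinFlow d, isFlowOf_kin⟩, ?_⟩
    intro φ hφ s
    have hφs : φ s = fun x : Phase d => (fun i => x.1 i + 2*s*x.2 i, x.2) := by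
      funext x; exact kin_flow_unique φ hφ s x
    rw [hφs]
    exact key s
  · intro s
    exact key s
end
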